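/- Suppose q is odd, o is the ring of integers of a non-archimedean local field with maximal ideal p and residue cardinality q, and let q0 = p^m be a nonzero proper ideal. Let a ∈ GL_{n+1}(o/q0) be such that (i) the image of a in GL_{n+1}(o/p) is scalar, and (ii) a² is scalar in GL_{n+1}(o/q0). Then a is scalar in GL_{n+1}(o/q0). -/

import Mathlib

open Matrix

private lemma entry_mul_mem {R : Type*} [CommRing R] (I : Ideal R) {n : ℕ} {k : ℕ}
    (e f : Matrix (Fin (n+1)) (Fin (n+1)) R) (he : ∀ i j, e i j ∈ I ^ k)
    (hf : ∀ i j, f i j ∈ I ^ k) (hk : 1 ≤ k)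
    (i j : Fin (n+1)) : (e * f) i j ∈ I ^ (k+1) := by
  rw [Matrix.mul_apply]
  refine Ideal.sum_mem _ fun l _ => ?_
  rw [pow_succ]
  exact Ideal.mul_mem_mul (he i l) (Ideal.pow_le_self (by omega) (hf l j))

private lemma key {R : Type*} [CommRing R] (I : Ideal R) (m : ℕ) (hm : 1 ≤ m)
    (hI : I ^ m = ⊥) {n : ℕ} (μ c : R) (hμ : IsUnit μ)
    (b : Matrix (Fin (n+1)) (Fin (n+1)) R) (hb : ∀ i j, b i j ∈ I)
    (hc : μ • b + b * b = c • (1 : Matrix (Fin (n+1)) (Fin (n+1)) R)) : ∃ t : R, b = t • 1 := by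
  have hcI : c ∈ I := by
    have h00 : μ * b 0 0 + (b * b) 0 0 = c := by
      have h := congrFun (congrFun hc 0) 0
      simpa [Matrix.add_apply, Matrix.smul_apply, Matrix.one_apply] using h
    rw [← h00]
    refine I.add_mem (I.mul_mem_left _ (hb 0 0)) ?_
    rw [Matrix.mul_apply]
    exact Ideal.sum_mem _ fun l _ => I.mul_mem_left _ (hb l 0)
  have main : ∀ k : ℕ, ∃ t ∈ I, ∀ i j, (b - t • 1) i j ∈ I ^ (k+1) := by
    intro k
    induction k with
    | zero => exact ⟨0, I.zero_mem, fun i j => by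
        simpa [Matrix.sub_apply, Matrix.smul_apply] using hb i j⟩
    | succ k ih =>
      obtain ⟨t, htI, ht⟩ := ih
      have hnil : IsNilpotent (2 * t) := by
        refine ⟨m, ?_⟩
        have h1 : (2 * t) ^ m ∈ I ^ m := by
          rw [mul_pow]
          exact Ideal.mul_mem_left _ _ (Ideal.pow_mem_pow htI m)
        rwa [hI, Ideal.mem_bot] at h1
      have hv : IsUnit (μ + 2 * t) := hnil.isUnit_add_left_of_commute hμ (mul_comm _ _)
      obtain ⟨v, hv⟩ := hv
      set e : Matrix (Fin (n+1)) (Fin (n+1)) R := b - t • 1 with he_def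
      set d : R := c - μ * t - t * t with hd_def
      have hbb : b * b = c • (1 : Matrix (Fin (n+1)) (Fin (n+1)) R) - μ • b := by
        rw [← hc]; abel
      have hexp : (b - t • 1) * (b - t • 1)
          = (c • (1 : Matrix (Fin (n+1)) (Fin (n+1)) R) - μ • b) - t • b - t • b
            + (t * t) • 1 := by
        simp only [sub_mul, mul_sub, Matrix.smul_mul, Matrix.mul_smul, Matrix.one_mul,
          Matrix.mul_one, smul_smul]
        rw [hbb]
        module
      have hd : (μ + 2*t) • e = d • (1 : Matrix (Fin (n+1)) (Fin (n+1)) R) - e * e := by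
        rw [he_def, hd_def, hexp]
        module
      have hee : e = ((v⁻¹ : Rˣ) : R) • (d • (1 : Matrix (Fin (n+1)) (Fin (n+1)) R) - e * e) := by
        calc e = (v⁻¹ : Rˣ) • (v • e) := (inv_smul_smul v e).symm
          _ = ((v⁻¹ : Rˣ) : R) • ((μ + 2*t) • e) := by
              simp only [Units.smul_def]; rw [hv]
          _ = ((v⁻¹ : Rˣ) : R) • (d • (1 : Matrix (Fin (n+1)) (Fin (n+1)) R) - e * e) := by
              rw [hd]
      refine ⟨t + ((v⁻¹ : Rˣ) : R) * d, I.add_mem htI (I.mul_mem_left _ ?_), fun i j => ?_⟩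
      · rw [hd_def]
        exact I.sub_mem (I.sub_mem hcI (I.mul_mem_left _ htI)) (I.mul_mem_left _ htI)
      · have hfin : b - (t + ((v⁻¹ : Rˣ) : R) * d) • 1
            = (-((v⁻¹ : Rˣ) : R)) • (e * e) := by
          have h1 : b - (t + ((v⁻¹ : Rˣ) : R) * d) • (1 : Matrix (Fin (n+1)) (Fin (n+1)) R)
              = e - (((v⁻¹ : Rˣ) : R) * d) • 1 := by
            rw [he_def]; module
          rw [h1]
          conv_lhs => rw [hee]
          module
        rw [hfin, Matrix.smul_apply]
        exact Ideal.mul_mem_left _ _ (entry_mul_mem I e e ht ht (by omega) i j)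
  obtain ⟨t, htI, ht⟩ := main (m - 1)
  have hmm : m - 1 + 1 = m := by omega
  rw [hmm, hI] at ht
  refine ⟨t, ?_⟩
  ext i j
  have h := ht i j
  rw [Ideal.mem_bot, Matrix.sub_apply, sub_eq_zero] at h
  exact h



/-- Suppose `q` is odd, `o` the ring of integers of a non-archimedean local field (a DVR) with
maximal ideal `p` and residue cardinality `q`, and `q0 = p^m` a nonzero proper ideal.  Let
`a ∈ GL_{n+1}(o/q0)` be such that (i) the image of `a` in `GL_{n+1}(o/p)` is scalar and (ii)
`a²` is scalar.  Then `a` is scalar. -/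
theorem stmt_18 (n : ℕ) (o : Type*) [CommRing o] [IsDomain o] [IsDiscreteValuationRing o]
    [Fintype (IsLocalRing.ResidueField o)] (q : ℕ)
    (hq : Fintype.card (IsLocalRing.ResidueField o) = q) (hodd : Odd q)
    (m : ℕ) (hm : 1 ≤ m)
    (a : Matrix (Fin (n + 1)) (Fin (n + 1)) (o ⧸ (IsLocalRing.maximalIdeal o ^ m)))
    (ha : IsUnit a)
    (h1 : ∃ z : o ⧸ IsLocalRing.maximalIdeal o,
      a.map (Ideal.Quotient.factor (S := IsLocalRing.maximalIdeal o ^ m)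
          (T := IsLocalRing.maximalIdeal o)
          (Ideal.pow_le_self (Nat.one_le_iff_ne_zero.mp hm))) =
        z • (1 : Matrix (Fin (n + 1)) (Fin (n + 1)) (o ⧸ IsLocalRing.maximalIdeal o)))
    (h2 : ∃ z : o ⧸ (IsLocalRing.maximalIdeal o ^ m),
      a * a = z • (1 : Matrix (Fin (n + 1)) (Fin (n + 1))
        (o ⧸ (IsLocalRing.maximalIdeal o ^ m)))) :
    ∃ z : o ⧸ (IsLocalRing.maximalIdeal o ^ m),
      a = z • (1 : Matrix (Fin (n + 1)) (Fin (n + 1))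
        (o ⧸ (IsLocalRing.maximalIdeal o ^ m))) := by
  letI : Field (o ⧸ IsLocalRing.maximalIdeal o) :=
    Ideal.Quotient.field (IsLocalRing.maximalIdeal o)
  obtain ⟨z, hz⟩ := h1
  obtain ⟨z₂, hz₂⟩ := h2
  set φ := Ideal.Quotient.factor (S := IsLocalRing.maximalIdeal o ^ m) (T := IsLocalRing.maximalIdeal o)
    (Ideal.pow_le_self (Nat.one_le_iff_ne_zero.mp hm)) with hφ
  set I : Ideal (o ⧸ (IsLocalRing.maximalIdeal o ^ m)) :=
    (IsLocalRing.maximalIdeal o).map (Ideal.Quotient.mk (IsLocalRing.maximalIdeal o ^ m)) with hI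
  -- `I ^ m = 0`
  have hIm : I ^ m = ⊥ := by
    rw [hI, ← Ideal.map_pow, Ideal.map_quotient_self]
  -- kernel of the factor map is contained in `I`
  have hker : ∀ x : o ⧸ (IsLocalRing.maximalIdeal o ^ m), φ x = 0 → x ∈ I := by
    intro x hx
    obtain ⟨y, rfl⟩ := Ideal.Quotient.mk_surjective x
    rw [hφ, Ideal.Quotient.factor_mk, Ideal.Quotient.eq_zero_iff_mem] at hx
    exact Ideal.mem_map_of_mem _ hx
  -- elements of `I` are nilpotent
  have hnilI : ∀ x : o ⧸ (IsLocalRing.maximalIdeal o ^ m), x ∈ I → IsNilpotent x := by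
    intro x hx
    refine ⟨m, ?_⟩
    have hxm := Ideal.pow_mem_pow hx m
    rwa [hIm, Ideal.mem_bot] at hxm
  -- 2 is a unit in `o`, hence in the quotient
  have h2o : IsUnit (2 : o) := by
    by_contra h
    have hmem : (2 : o) ∈ IsLocalRing.maximalIdeal o :=
      (IsLocalRing.mem_maximalIdeal _).2 (mem_nonunits_iff.2 h)
    have h20 : (2 : IsLocalRing.ResidueField o) = 0 := by
      have h0 := Ideal.Quotient.eq_zero_iff_mem.mpr hmem
      rwa [map_ofNat] at h0
    have hdvd : ringChar (IsLocalRing.ResidueField o) ∣ 2 :=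
      (ringChar.spec (IsLocalRing.ResidueField o) 2).mp (by exact_mod_cast h20)
    have hchar : ringChar (IsLocalRing.ResidueField o) = 2 := by
      rcases (Nat.dvd_prime Nat.prime_two).mp hdvd with h1 | h1
      · exact absurd h1 CharP.ringChar_ne_one
      · exact h1
    have heven := FiniteField.even_card_of_char_two hchar
    rw [hq] at heven
    rw [Nat.odd_iff] at hodd
    omega
  have h2R : IsUnit (2 : o ⧸ (IsLocalRing.maximalIdeal o ^ m)) := by
    have h2m := h2o.map (Ideal.Quotient.mk (IsLocalRing.maximalIdeal o ^ m))
    rwa [map_ofNat] at h2m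
  -- lift `z`
  obtain ⟨x₀, hx₀⟩ := Ideal.Quotient.mk_surjective (I := IsLocalRing.maximalIdeal o) z
  set lam : o ⧸ (IsLocalRing.maximalIdeal o ^ m) :=
    Ideal.Quotient.mk (IsLocalRing.maximalIdeal o ^ m) x₀ with hlam
  have hφlam : φ lam = z := by rw [hlam, hφ, Ideal.Quotient.factor_mk, hx₀]
  -- entries of `b := a - lam • 1` lie in `I`
  set b := a - lam • (1 : Matrix (Fin (n+1)) (Fin (n+1)) (o ⧸ (IsLocalRing.maximalIdeal o ^ m)))
    with hb_def
  have hb : ∀ i j, b i j ∈ I := by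
    intro i j
    apply hker
    have hzij := Matrix.ext_iff.mpr hz i j
    rw [Matrix.map_apply] at hzij
    rw [hb_def, Matrix.sub_apply, Matrix.smul_apply, smul_eq_mul, _root_.map_sub, _root_.map_mul, hφlam, hzij]
    by_cases hij : i = j <;> simp [Matrix.one_apply, hij, Matrix.smul_apply]
  -- `z` is a unit
  have hzu : IsUnit z := by
    by_contra h
    have hz0 : z = 0 := not_not.mp (mt isUnit_iff_ne_zero.mpr h)
    have hza : IsUnit (a.map φ) := by
      have h' := ha.map (RingHom.mapMatrix φ)
      rwa [RingHom.mapMatrix_apply] at h'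
    rw [hz, hz0, zero_smul] at hza
    have h01 := Matrix.ext_iff.mpr (isUnit_zero_iff.mp hza) 0 0
    simp [Matrix.one_apply] at h01
  -- `lam` is a unit
  obtain ⟨y₀, hy₀⟩ := Ideal.Quotient.mk_surjective (I := IsLocalRing.maximalIdeal o)
    (↑hzu.unit⁻¹ : o ⧸ IsLocalRing.maximalIdeal o)
  set w : o ⧸ (IsLocalRing.maximalIdeal o ^ m) :=
    Ideal.Quotient.mk (IsLocalRing.maximalIdeal o ^ m) y₀ with hw
  have hφw : φ (lam * w) = 1 := by
    rw [_root_.map_mul, hφlam, hw, hφ, Ideal.Quotient.factor_mk, hy₀, IsUnit.mul_val_inv]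
  have hk1 : 1 - lam * w ∈ I := by
    apply hker
    rw [_root_.map_sub, _root_.map_one, hφw, sub_self]
  have hlw : IsUnit (lam * w) := by
    have hnil := (hnilI _ hk1).isUnit_one_sub
    simpa using hnil
  have hlamu : IsUnit lam := isUnit_of_mul_isUnit_left hlw
  -- main computation
  have hc : (2*lam) • b + b * b = (z₂ - lam*lam) •
      (1 : Matrix (Fin (n+1)) (Fin (n+1)) (o ⧸ (IsLocalRing.maximalIdeal o ^ m))) := by
    have hexp : b * b = a * a - lam • a - lam • a + (lam*lam) • 1 := by
      rw [hb_def]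
      simp only [sub_mul, mul_sub, Matrix.smul_mul, Matrix.mul_smul, Matrix.one_mul,
        Matrix.mul_one, smul_smul]
      module
    rw [hexp, hz₂, hb_def]
    module
  obtain ⟨t, ht⟩ := key I m hm hIm (2*lam) (z₂ - lam*lam) (h2R.mul hlamu) b hb hc
  refine ⟨t + lam, ?_⟩
  have haeq : a = b + lam • 1 := by rw [hb_def]; module
  rw [haeq, ht, add_smul]
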